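/- Let p, q ∈ (0,1) be constants with q > max{ (3 − p − √((3 − p)² − 4p))/2 , 2p − 1 }. Then, with high probability (as n → ∞ along even n), for G drawn from the stochastic block model 𝒢_{n,p,q} the metric LP relaxation fails to recover the planted bisection: the cut vector of the planted bisection is not the unique optimal solution of (LP-P). -/

import Mathlib

open MeasureTheory Filter

noncomputable section
open scoped Classical ENNReal

/-- `i` and `j` lie on the same side of the planted bisection
`V₁ = {0, …, n/2 - 1}`, `V₂ = {n/2, …, n-1}`. -/
def sameSide (n : ℕ) (i j : Fin n) : Prop :=
  ((i : ℕ) < n / 2 ↔ (j : ℕ) < n / 2)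

/-- The sum of `f i j` over all unordered pairs `{i, j}` with `i < j`. -/
def pairSum (n : ℕ) (f : Fin n → Fin n → ℝ) : ℝ :=
  ∑ i : Fin n, ∑ j : Fin n, if i < j then f i j else 0

/-- Feasibility for the metric LP relaxation (LP-P): symmetry of the indexing by
unordered pairs, the triangle inequalities, the perimeter inequalities, and the
equipartition equality constraint. -/
def LPfeasible (n : ℕ) (x : Fin n → Fin n → ℝ) : Prop :=
  (∀ i j, x i j = x j i) ∧
  (∀ i j k : Fin n, i ≠ j → i ≠ k → j ≠ k → x i j ≤ x i k + x j k) ∧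
  (∀ i j k : Fin n, i < j → j < k → x i j + x i k + x j k ≤ 2) ∧
  pairSum n x = (n : ℝ) ^ 2 / 4

/-- The objective function of (LP-P): `∑_{(i,j) ∈ E} x_{ij}`, each edge counted once. -/
def LPobj (n : ℕ) (G : SimpleGraph (Fin n)) (x : Fin n → Fin n → ℝ) : ℝ :=
  ∑ i : Fin n, ∑ j : Fin n, if i < j ∧ G.Adj i j then x i j else 0

/-- The cut vector of the bisection `(S, Sᶜ)`. -/
def cutVecOf {n : ℕ} (S : Finset (Fin n)) : Fin n → Fin n → ℝ :=
  fun i j => if (i ∈ S ↔ j ∈ S) then 0 else 1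

/-- The cut vector of the planted bisection `V₁ = {0, …, n/2 - 1}`, `V₂ = {n/2, …, n-1}`. -/
def cutVec (n : ℕ) : Fin n → Fin n → ℝ :=
  fun i j => if sameSide n i j then 0 else 1

/-- The LP relaxation (LP-P) for the graph `G` recovers the bisection with cut vector
`xb`: `xb` is feasible, and it is the unique optimal solution (any feasible point
with the same objective value agrees with `xb` on all off-diagonal entries). -/
def LPrecoversOf (n : ℕ) (G : SimpleGraph (Fin n)) (xb : Fin n → Fin n → ℝ) : Prop :=
  LPfeasible n xb ∧
  ∀ x : Fin n → Fin n → ℝ, LPfeasible n x →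
    LPobj n G xb ≤ LPobj n G x ∧
    (LPobj n G x = LPobj n G xb → ∀ i j : Fin n, i ≠ j → x i j = xb i j)

/-- The LP relaxation (LP-P) for `G` recovers the planted bisection
`V₁ = {0, …, n/2 - 1}`, `V₂ = {n/2, …, n-1}`. -/
def LPrecovers (n : ℕ) (G : SimpleGraph (Fin n)) : Prop :=
  LPrecoversOf n G (cutVec n)

/-- The Bernoulli measure on `Bool` with success probability `p` (a real number,
truncated to `[0,1]`). -/
def bern (p : ℝ) : MeasureTheory.Measure Bool :=
  (PMF.bernoulli (min (Real.toNNReal p) 1) (min_le_right _ _)).toMeasure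

instance (p : ℝ) : MeasureTheory.IsProbabilityMeasure (bern p) :=
  PMF.toMeasure.isProbabilityMeasure _

/-- The distribution of a random graph on `Fin n` in which, independently for every
ordered pair `(i, j)` with `i < j`, the pair is an edge with probability `pe (i, j)`:
the product of Bernoulli measures on the family of edge indicators. -/
def graphMeasure (n : ℕ) (pe : Fin n × Fin n → ℝ) :
    MeasureTheory.Measure (Fin n × Fin n → Bool) :=
  MeasureTheory.Measure.pi (fun ij => bern (pe ij))

/-- The graph on `Fin n` determined by the edge indicators `ω`: `i` and `j` are
adjacent iff the indicator of the ordered pair `(min i j, max i j)` is `true`. -/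
def graphOf {n : ℕ} (ω : Fin n × Fin n → Bool) : SimpleGraph (Fin n) :=
  SimpleGraph.fromRel (fun i j => i < j ∧ ω (i, j) = true)

/-- Edge probabilities of the Erdős–Rényi model `𝒢_{n,p}`. -/
def erPe (n : ℕ) (p : ℝ) : Fin n × Fin n → ℝ :=
  fun ij => if ij.1 < ij.2 then p else 0

/-- Edge probabilities of the stochastic block model `𝒢_{n,p,q}` with planted
bisection `V₁ = {0, …, n/2 - 1}`, `V₂ = {n/2, …, n-1}`: each pair of nodes within
`V₁` or within `V₂` is an edge with probability `p`, and each pair with one node in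
`V₁` and one in `V₂` is an edge with probability `q`. -/
def sbmPe (n : ℕ) (p q : ℝ) : Fin n × Fin n → ℝ :=
  fun ij => if ij.1 < ij.2 then (if sameSide n ij.1 ij.2 then p else q) else 0

/-- Edge probabilities of the bipartite Erdős–Rényi model `𝒢_{n,0,q}`. -/
def bipPe (n : ℕ) (q : ℝ) : Fin n × Fin n → ℝ := sbmPe n 0 q

section AuxNonRecovery
open Finset ProbabilityTheory

lemma sameSide_iff (m : ℕ) (i j : Fin (2*m)) :
    sameSide (2*m) i j ↔ ((i : ℕ) < m ↔ (j : ℕ) < m) := by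
  unfold sameSide
  rw [Nat.mul_div_cancel_left m (by norm_num)]

def WPs (m : ℕ) : Finset (Fin (2*m) × Fin (2*m)) :=
  univ.filter (fun e => e.1 < e.2 ∧ sameSide (2*m) e.1 e.2)

def CPs (m : ℕ) : Finset (Fin (2*m) × Fin (2*m)) :=
  univ.filter (fun e => e.1 < e.2 ∧ ¬ sameSide (2*m) e.1 e.2)

lemma cross_mem (m : ℕ) {e : Fin (2*m) × Fin (2*m)} (he : e ∈ CPs m) :
    (e.1 : ℕ) < m ∧ m ≤ (e.2 : ℕ) := by
  simp only [CPs, mem_filter, mem_univ, true_and, sameSide_iff] at he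
  obtain ⟨hlt, hns⟩ := he
  have : (e.1 : ℕ) < (e.2 : ℕ) := hlt
  constructor
  · by_contra hc; push_neg at hc
    apply hns; constructor
    · intro h; omega
    · intro h; omega
  · by_contra hc; push_neg at hc
    apply hns; constructor
    · intro _; omega
    · intro h; omega

lemma CPs_card (m : ℕ) : (CPs m).card = m * m := by
  classical
  have := Finset.card_bij' (s := CPs m) (t := (univ : Finset (Fin m × Fin m)))
    (fun e he => (⟨(e.1 : ℕ), (cross_mem m he).1⟩, ⟨(e.2 : ℕ) - m, by
        have h2 := (cross_mem m he).2
        have : (e.2 : ℕ) < 2*m := e.2.isLt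
        omega⟩))
    (fun a _ => ((⟨(a.1 : ℕ), by omega⟩ : Fin (2*m)), (⟨m + (a.2 : ℕ), by omega⟩ : Fin (2*m))))
    (fun e he => mem_univ _)
    (fun a ha => by
      simp only [CPs, mem_filter, mem_univ, true_and, sameSide_iff]
      constructor
      · exact Fin.mk_lt_mk.mpr (by omega)
      · omega)
    (fun e he => by
      have h1 := (cross_mem m he).1
      have h2 := (cross_mem m he).2
      refine Prod.ext ?_ ?_ <;> apply Fin.ext <;> simp <;> omega)
    (fun a ha => by refine Prod.ext ?_ ?_ <;> apply Fin.ext <;> simp)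
  rw [this]
  simp [Fintype.card_prod]

lemma WPs_card (m : ℕ) : (WPs m).card = m * m - m := by
  classical
  have key : (WPs m).card + (CPs m).card = 2*(m*m) - m := by
    have h1 : WPs m = ((univ : Finset (Fin (2*m) × Fin (2*m))).filter
        (fun e => e.1 < e.2)).filter (fun e => sameSide (2*m) e.1 e.2) := by
      rw [Finset.filter_filter]; rfl
    have h2 : CPs m = ((univ : Finset (Fin (2*m) × Fin (2*m))).filter
        (fun e => e.1 < e.2)).filter (fun e => ¬ sameSide (2*m) e.1 e.2) := by
      rw [Finset.filter_filter]; rfl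
    rw [h1, h2, Finset.card_filter_add_card_filter_not]
    have hcard : ((univ : Finset (Fin (2*m) × Fin (2*m))).filter (fun e => e.1 < e.2)).card
        = ∑ j : Fin (2*m), (j : ℕ) := by
      rw [Finset.card_filter]
      rw [← Finset.univ_product_univ, Finset.sum_product_right]
      refine Finset.sum_congr rfl (fun j _ => ?_)
      have h5 : (∑ i : Fin (2*m), if (i, j).1 < (i, j).2 then 1 else 0)
          = (univ.filter (fun i : Fin (2*m) => i < j)).card := by
        rw [Finset.card_filter]
      rw [h5]
      have h6 : (univ.filter (fun i : Fin (2*m) => i < j)) = Finset.Iio j := by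
        ext i; simp
      rw [h6, Fin.card_Iio]
    rw [hcard, Fin.sum_univ_eq_sum_range (fun i => i)]
    have h8 := Finset.sum_range_id_mul_two (2*m)
    have h9 : 2*m*(2*m-1) = (2*(m*m) - m)*2 := by
      rcases Nat.eq_zero_or_pos m with h|h
      · subst h; rfl
      · have hmm : m ≤ 2*(m*m) := by nlinarith
        have hm1 : 1 ≤ 2*m := by omega
        zify [hmm, hm1]
        ring
    rw [h9] at h8
    exact Nat.eq_of_mul_eq_mul_right (by norm_num) h8
  have h4 := CPs_card m
  omega

lemma graphOf_adj {n : ℕ} (ω : Fin n × Fin n → Bool) {i j : Fin n} (hij : i < j) :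
    (graphOf ω).Adj i j ↔ ω (i, j) = true := by
  simp only [graphOf, SimpleGraph.fromRel_adj]
  constructor
  · rintro ⟨hne, (⟨-, h⟩ | ⟨hji, -⟩)⟩
    · exact h
    · exact absurd hij (asymm hji)
  · intro h
    exact ⟨ne_of_lt hij, Or.inl ⟨hij, h⟩⟩

/-- adjacency indicator -/
def aI {n : ℕ} (ω : Fin n × Fin n → Bool) (i j : Fin n) : ℝ :=
  if (graphOf ω).Adj i j then 1 else 0

lemma aI_nonneg {n : ℕ} (ω : Fin n × Fin n → Bool) (i j : Fin n) : 0 ≤ aI ω i j := by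
  unfold aI; split <;> norm_num

lemma aI_le_one {n : ℕ} (ω : Fin n × Fin n → Bool) (i j : Fin n) : aI ω i j ≤ 1 := by
  unfold aI; split <;> norm_num

lemma aI_symm {n : ℕ} (ω : Fin n × Fin n → Bool) (i j : Fin n) : aI ω i j = aI ω j i := by
  unfold aI
  rw [SimpleGraph.adj_comm]

/-- the perturbed LP solution -/
def consX (m : ℕ) (ω : Fin (2*m) × Fin (2*m) → Bool) (h β : ℝ) :
    Fin (2*m) → Fin (2*m) → ℝ :=
  fun i j => if sameSide (2*m) i j then (1/8) * (2 - aI ω i j)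
    else 1 - (1/8) * (β + h * aI ω i j)

lemma sameSide_symm {n : ℕ} {i j : Fin n} (h : sameSide n i j) : sameSide n j i := h.symm

lemma sameSide_refl {n : ℕ} (i : Fin n) : sameSide n i i := Iff.rfl

section Feas

variable {m : ℕ} (ω : Fin (2*m) × Fin (2*m) → Bool) (h β : ℝ)

lemma consX_symm : ∀ i j, consX m ω h β i j = consX m ω h β j i := by
  intro i j
  unfold consX
  rw [aI_symm]
  by_cases hs : sameSide (2*m) i j
  · rw [if_pos hs, if_pos (sameSide_symm hs)]
  · rw [if_neg hs, if_neg (fun hc => hs (sameSide_symm hc))]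

lemma consX_triangle (hh0 : 0 ≤ h) (hh1 : h ≤ 1) (hβ1 : 1 ≤ β) (hβ2 : β ≤ 2) :
    ∀ i j k : Fin (2*m), i ≠ j → i ≠ k → j ≠ k →
      consX m ω h β i j ≤ consX m ω h β i k + consX m ω h β j k := by
  intro i j k _ _ _
  have A1 := aI_nonneg ω i j; have A2 := aI_le_one ω i j
  have B1 := aI_nonneg ω i k; have B2 := aI_le_one ω i k
  have C1 := aI_nonneg ω j k; have C2 := aI_le_one ω j k
  have hA : 0 ≤ h * aI ω i j := mul_nonneg hh0 A1
  have hA' : h * aI ω i j ≤ 1 := mul_le_one₀ hh1 A1 A2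
  have hB : 0 ≤ h * aI ω i k := mul_nonneg hh0 B1
  have hB' : h * aI ω i k ≤ 1 := mul_le_one₀ hh1 B1 B2
  have hC : 0 ≤ h * aI ω j k := mul_nonneg hh0 C1
  have hC' : h * aI ω j k ≤ 1 := mul_le_one₀ hh1 C1 C2
  unfold consX
  by_cases hi : (i : ℕ) < m <;> by_cases hj : (j : ℕ) < m <;> by_cases hk : (k : ℕ) < m <;>
    simp only [sameSide_iff, hi, hj, hk, iff_true, iff_false, if_true, if_false,
      not_true_eq_false, not_false_eq_true, true_iff, false_iff, if_pos, if_neg] <;>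
    nlinarith

lemma consX_perimeter (hh0 : 0 ≤ h) (hh1 : h ≤ 1) (hβ1 : 1 ≤ β) (hβ2 : β ≤ 2) :
    ∀ i j k : Fin (2*m), i < j → j < k →
      consX m ω h β i j + consX m ω h β i k + consX m ω h β j k ≤ 2 := by
  intro i j k _ _
  have A1 := aI_nonneg ω i j; have A2 := aI_le_one ω i j
  have B1 := aI_nonneg ω i k; have B2 := aI_le_one ω i k
  have C1 := aI_nonneg ω j k; have C2 := aI_le_one ω j k
  have hA : 0 ≤ h * aI ω i j := mul_nonneg hh0 A1
  have hA' : h * aI ω i j ≤ 1 := mul_le_one₀ hh1 A1 A2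
  have hB : 0 ≤ h * aI ω i k := mul_nonneg hh0 B1
  have hB' : h * aI ω i k ≤ 1 := mul_le_one₀ hh1 B1 B2
  have hC : 0 ≤ h * aI ω j k := mul_nonneg hh0 C1
  have hC' : h * aI ω j k ≤ 1 := mul_le_one₀ hh1 C1 C2
  unfold consX
  by_cases hi : (i : ℕ) < m <;> by_cases hj : (j : ℕ) < m <;> by_cases hk : (k : ℕ) < m <;>
    simp only [sameSide_iff, hi, hj, hk, iff_true, iff_false, if_true, if_false,
      not_true_eq_false, not_false_eq_true, true_iff, false_iff, if_pos, if_neg] <;>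
    nlinarith

end Feas

def EinN (m : ℕ) (ω : Fin (2*m) × Fin (2*m) → Bool) : ℕ :=
  ((WPs m).filter (fun e => ω e = true)).card

def EcrN (m : ℕ) (ω : Fin (2*m) × Fin (2*m) → Bool) : ℕ :=
  ((CPs m).filter (fun e => ω e = true)).card

section Sums

variable {m : ℕ} (ω : Fin (2*m) × Fin (2*m) → Bool) (h β : ℝ)

lemma pairSum_split (f : Fin (2*m) → Fin (2*m) → ℝ) :
    pairSum (2*m) f = ∑ e ∈ WPs m, f e.1 e.2 + ∑ e ∈ CPs m, f e.1 e.2 := by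
  unfold pairSum
  rw [← Finset.sum_product']
  rw [Finset.univ_product_univ]
  rw [← Finset.sum_filter]
  have hsplit := Finset.sum_filter_add_sum_filter_not
    ((univ : Finset (Fin (2*m) × Fin (2*m))).filter (fun e => e.1 < e.2))
    (fun e => sameSide (2*m) e.1 e.2) (fun e => f e.1 e.2)
  rw [Finset.filter_filter, Finset.filter_filter] at hsplit
  exact hsplit.symm

lemma aI_eq_on_WPs {e : Fin (2*m) × Fin (2*m)} (he : e ∈ WPs m) :
    aI ω e.1 e.2 = if ω e = true then 1 else 0 := by
  have hlt : e.1 < e.2 := by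
    simp only [WPs, mem_filter] at he; exact he.2.1
  have hiff : (graphOf ω).Adj e.1 e.2 ↔ ω e = true := by
    have h' := graphOf_adj ω hlt
    rwa [Prod.mk.eta] at h'
  unfold aI
  by_cases hω : ω e = true
  · rw [if_pos (hiff.mpr hω), if_pos hω]
  · rw [if_neg (fun hc => hω (hiff.mp hc)), if_neg hω]

lemma aI_eq_on_CPs {e : Fin (2*m) × Fin (2*m)} (he : e ∈ CPs m) :
    aI ω e.1 e.2 = if ω e = true then 1 else 0 := by
  have hlt : e.1 < e.2 := by
    simp only [CPs, mem_filter] at he; exact he.2.1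
  have hiff : (graphOf ω).Adj e.1 e.2 ↔ ω e = true := by
    have h' := graphOf_adj ω hlt
    rwa [Prod.mk.eta] at h'
  unfold aI
  by_cases hω : ω e = true
  · rw [if_pos (hiff.mpr hω), if_pos hω]
  · rw [if_neg (fun hc => hω (hiff.mp hc)), if_neg hω]

lemma sum_aI_WPs : ∑ e ∈ WPs m, aI ω e.1 e.2 = (EinN m ω : ℝ) := by
  rw [Finset.sum_congr rfl (fun e he => aI_eq_on_WPs ω he)]
  rw [Finset.sum_boole]
  rfl

lemma sum_aI_CPs : ∑ e ∈ CPs m, aI ω e.1 e.2 = (EcrN m ω : ℝ) := by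
  rw [Finset.sum_congr rfl (fun e he => aI_eq_on_CPs ω he)]
  rw [Finset.sum_boole]
  rfl

lemma mem_WPs_sameSide {e : Fin (2*m) × Fin (2*m)} (he : e ∈ WPs m) :
    sameSide (2*m) e.1 e.2 := by
  simp only [WPs, mem_filter] at he; exact he.2.2

lemma mem_CPs_not_sameSide {e : Fin (2*m) × Fin (2*m)} (he : e ∈ CPs m) :
    ¬ sameSide (2*m) e.1 e.2 := by
  simp only [CPs, mem_filter] at he; exact he.2.2

lemma pairSum_consX :
    pairSum (2*m) (consX m ω h β)
      = (1/8) * (2 * ((WPs m).card : ℝ) - EinN m ω)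
        + ((CPs m).card : ℝ) - (1/8) * (β * ((CPs m).card : ℝ) + h * EcrN m ω) := by
  rw [pairSum_split]
  have h1 : ∑ e ∈ WPs m, consX m ω h β e.1 e.2
      = (1/8) * (2 * ((WPs m).card : ℝ) - EinN m ω) := by
    have : ∀ e ∈ WPs m, consX m ω h β e.1 e.2 = (1/8) * (2 - aI ω e.1 e.2) := by
      intro e he
      unfold consX
      rw [if_pos (mem_WPs_sameSide he)]
    rw [Finset.sum_congr rfl this, ← Finset.mul_sum, Finset.sum_sub_distrib,
      Finset.sum_const, sum_aI_WPs]
    push_cast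
    ring
  have h2 : ∑ e ∈ CPs m, consX m ω h β e.1 e.2
      = ((CPs m).card : ℝ) - (1/8) * (β * ((CPs m).card : ℝ) + h * EcrN m ω) := by
    have : ∀ e ∈ CPs m, consX m ω h β e.1 e.2 = 1 - (1/8) * (β + h * aI ω e.1 e.2) := by
      intro e he
      unfold consX
      rw [if_neg (mem_CPs_not_sameSide he)]
    rw [Finset.sum_congr rfl this, Finset.sum_sub_distrib, Finset.sum_const,
      ← Finset.mul_sum, Finset.sum_add_distrib, Finset.sum_const, ← Finset.mul_sum,
      sum_aI_CPs]
    push_cast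
    ring
  rw [h1, h2]
  ring

end Sums

section Obj

variable {m : ℕ} (ω : Fin (2*m) × Fin (2*m) → Bool) (h β : ℝ)

lemma LPobj_split (x : Fin (2*m) → Fin (2*m) → ℝ) :
    LPobj (2*m) (graphOf ω) x
      = ∑ e ∈ (WPs m).filter (fun e => ω e = true), x e.1 e.2
        + ∑ e ∈ (CPs m).filter (fun e => ω e = true), x e.1 e.2 := by
  unfold LPobj
  rw [← Finset.sum_product', Finset.univ_product_univ, ← Finset.sum_filter]
  have hsplit := Finset.sum_filter_add_sum_filter_not
    ((univ : Finset (Fin (2*m) × Fin (2*m))).filter (fun e => e.1 < e.2 ∧ (graphOf ω).Adj e.1 e.2))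
    (fun e => sameSide (2*m) e.1 e.2) (fun e => x e.1 e.2)
  rw [Finset.filter_filter, Finset.filter_filter] at hsplit
  have e1 : (univ : Finset (Fin (2*m) × Fin (2*m))).filter
      (fun e => (e.1 < e.2 ∧ (graphOf ω).Adj e.1 e.2) ∧ sameSide (2*m) e.1 e.2)
      = (WPs m).filter (fun e => ω e = true) := by
    ext e
    simp only [WPs, mem_filter, mem_univ, true_and, and_assoc]
    constructor
    · rintro ⟨hlt, hadj, hs⟩
      refine ⟨hlt, hs, ?_⟩
      have := (graphOf_adj ω hlt).mp hadj
      rwa [Prod.mk.eta] at this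
    · rintro ⟨hlt, hs, hω⟩
      refine ⟨hlt, ?_, hs⟩
      apply (graphOf_adj ω hlt).mpr
      rwa [Prod.mk.eta]
  have e2 : (univ : Finset (Fin (2*m) × Fin (2*m))).filter
      (fun e => (e.1 < e.2 ∧ (graphOf ω).Adj e.1 e.2) ∧ ¬ sameSide (2*m) e.1 e.2)
      = (CPs m).filter (fun e => ω e = true) := by
    ext e
    simp only [CPs, mem_filter, mem_univ, true_and, and_assoc]
    constructor
    · rintro ⟨hlt, hadj, hs⟩
      refine ⟨hlt, hs, ?_⟩
      have := (graphOf_adj ω hlt).mp hadj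
      rwa [Prod.mk.eta] at this
    · rintro ⟨hlt, hs, hω⟩
      refine ⟨hlt, ?_, hs⟩
      apply (graphOf_adj ω hlt).mpr
      rwa [Prod.mk.eta]
  rw [e1, e2] at hsplit
  exact hsplit.symm

lemma LPobj_consX :
    LPobj (2*m) (graphOf ω) (consX m ω h β)
      = (1/8) * (EinN m ω : ℝ) + (1 - (1/8)*(β + h)) * (EcrN m ω : ℝ) := by
  rw [LPobj_split]
  have h1 : ∀ e ∈ (WPs m).filter (fun e => ω e = true),
      consX m ω h β e.1 e.2 = (1/8) * 1 := by
    intro e he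
    rw [mem_filter] at he
    unfold consX
    rw [if_pos (mem_WPs_sameSide he.1), aI_eq_on_WPs ω he.1, if_pos he.2]
    norm_num
  have h2 : ∀ e ∈ (CPs m).filter (fun e => ω e = true),
      consX m ω h β e.1 e.2 = 1 - (1/8)*(β + h) := by
    intro e he
    rw [mem_filter] at he
    unfold consX
    rw [if_neg (mem_CPs_not_sameSide he.1), aI_eq_on_CPs ω he.1, if_pos he.2]
    ring
  rw [Finset.sum_congr rfl h1, Finset.sum_congr rfl h2, Finset.sum_const, Finset.sum_const]
  unfold EinN EcrN
  push_cast
  ring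

lemma LPobj_cut :
    LPobj (2*m) (graphOf ω) (cutVec (2*m)) = (EcrN m ω : ℝ) := by
  rw [LPobj_split]
  have h1 : ∀ e ∈ (WPs m).filter (fun e => ω e = true),
      cutVec (2*m) e.1 e.2 = 0 := by
    intro e he
    rw [mem_filter] at he
    unfold cutVec
    rw [if_pos (mem_WPs_sameSide he.1)]
  have h2 : ∀ e ∈ (CPs m).filter (fun e => ω e = true),
      cutVec (2*m) e.1 e.2 = 1 := by
    intro e he
    rw [mem_filter] at he
    unfold cutVec
    rw [if_neg (mem_CPs_not_sameSide he.1)]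
  rw [Finset.sum_congr rfl h1, Finset.sum_congr rfl h2, Finset.sum_const, Finset.sum_const]
  unfold EcrN
  simp

end Obj

section Master

lemma cast_WPs_card (m : ℕ) : ((WPs m).card : ℝ) = (m:ℝ)*m - m := by
  rcases Nat.eq_zero_or_pos m with h|h
  · subst h
    rw [WPs_card]
    norm_num
  · rw [WPs_card, Nat.cast_sub (Nat.le_mul_of_pos_left m h)]
    push_cast
    ring

lemma master (m : ℕ) (hm : 1 ≤ m) (ω : Fin (2*m) × Fin (2*m) → Bool) (h : ℝ)
    (hh0 : 0 ≤ h) (hh1 : h ≤ 1)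
    (hC1 : (m:ℝ)*m ≤ 2*((WPs m).card : ℝ) - (EinN m ω : ℝ) - h * (EcrN m ω : ℝ))
    (hC2 : (EinN m ω : ℝ) * ((m:ℝ)*m)
      < (2*((WPs m).card : ℝ) - (EinN m ω : ℝ) - h * (EcrN m ω : ℝ) + h * ((m:ℝ)*m))
        * (EcrN m ω : ℝ)) :
    ¬ LPrecovers (2*m) (graphOf ω) := by
  have hmmpos : (0:ℝ) < (m:ℝ)*m := by
    have : (1:ℝ) ≤ (m:ℝ) := by exact_mod_cast hm
    nlinarith
  set W : ℝ := ((WPs m).card : ℝ) with hW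
  set Ein : ℝ := (EinN m ω : ℝ) with hEin
  set Ecr : ℝ := (EcrN m ω : ℝ) with hEcr
  have hEin0 : 0 ≤ Ein := Nat.cast_nonneg _
  have hEcr0 : 0 ≤ Ecr := Nat.cast_nonneg _
  have hWv : W = (m:ℝ)*m - m := cast_WPs_card m
  set β : ℝ := (2*W - Ein - h*Ecr) / ((m:ℝ)*m) with hβ
  have hβ1 : 1 ≤ β := by
    rw [hβ, le_div_iff₀ hmmpos]
    linarith
  have hβ2 : β ≤ 2 := by
    rw [hβ, div_le_iff₀ hmmpos]
    have hm1 : (1:ℝ) ≤ (m:ℝ) := by exact_mod_cast hm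
    nlinarith [mul_nonneg hh0 hEcr0]
  have hfeas : LPfeasible (2*m) (consX m ω h β) := by
    refine ⟨consX_symm ω h β, consX_triangle ω h β hh0 hh1 hβ1 hβ2,
      consX_perimeter ω h β hh0 hh1 hβ1 hβ2, ?_⟩
    rw [pairSum_consX]
    have hcc : ((CPs m).card : ℝ) = (m:ℝ)*m := by
      rw [CPs_card]; push_cast; ring
    rw [hcc]
    have hβmm : β * ((m:ℝ)*m) = 2*W - Ein - h*Ecr := by
      rw [hβ, div_mul_cancel₀]
      exact ne_of_gt hmmpos
    rw [hβmm]
    push_cast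
    ring
  have hobj : LPobj (2*m) (graphOf ω) (consX m ω h β)
      < LPobj (2*m) (graphOf ω) (cutVec (2*m)) := by
    rw [LPobj_consX, LPobj_cut]
    have hkey : Ein < (β + h) * Ecr := by
      have hβh : (β + h) * Ecr = ((2*W - Ein - h*Ecr + h*((m:ℝ)*m)) * Ecr) / ((m:ℝ)*m) := by
        rw [hβ]
        field_simp
      rw [hβh, lt_div_iff₀ hmmpos]
      linarith [hC2]
    linarith
  rintro ⟨-, hopt⟩
  have := (hopt (consX m ω h β) hfeas).1
  linarith

end Master

lemma cast_CPs_card (m : ℕ) : ((CPs m).card : ℝ) = (m:ℝ)*m := by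
  rw [CPs_card]; push_cast; ring

/-- pure real-arithmetic core of the concentration argument -/
lemma arithC (p q h γ M Ein Ecr : ℝ)
    (hp0 : 0 < p) (hp1 : p < 1) (hq0 : 0 < q) (hq1 : q < 1)
    (hh0 : 0 ≤ h) (hh1 : h ≤ 1)
    (hD1 : 0 < 1 - p - h*q) (hD2 : 0 < q*(2 - p + h*(1-q)) - p)
    (hγ0 : 0 < γ) (hγa : γ ≤ (1 - p - h*q)/4)
    (hγb : γ ≤ (q*(2 - p + h*(1-q)) - p)/14) (hγq : γ ≤ q/2)
    (hM3 : (3:ℝ) ≤ M)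
    (hE1 : 4 ≤ M*(1 - p - h*q)) (hE2 : 8 ≤ M*(q*(2 - p + h*(1-q)) - p))
    (hEin0 : 0 ≤ Ein) (hEcr0 : 0 ≤ Ecr)
    (hIn : |Ein - p * (M*M - M)| < γ*(M*M))
    (hCr : |Ecr - q * (M*M)| < γ*(M*M)) :
    M*M ≤ 2*(M*M - M) - Ein - h*Ecr ∧
      Ein * (M*M) < (2*(M*M - M) - Ein - h*Ecr + h*(M*M)) * Ecr := by
  have hMpos : (0:ℝ) < M := by linarith
  have hX0 : (0:ℝ) ≤ M*M := by positivity
  have hpM : (0:ℝ) ≤ p*M := by positivity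
  have hInU : Ein ≤ p*(M*M) + γ*(M*M) := by
    have h1 := (abs_lt.mp hIn).2
    linarith
  have hCrU : Ecr ≤ q*(M*M) + γ*(M*M) := by
    have h1 := (abs_lt.mp hCr).2
    linarith
  have hCrL : q*(M*M) - γ*(M*M) ≤ Ecr := by
    have h1 := (abs_lt.mp hCr).1
    linarith
  have hMM3 : 3*M ≤ M*M := by
    have := mul_le_mul_of_nonneg_right hM3 hMpos.le
    linarith
  have hT1 : 1 ≤ 2 - p + h*(1-q) := by
    have := mul_nonneg hh0 (by linarith : (0:ℝ) ≤ 1 - q)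
    linarith
  have hT3 : 2 - p + h*(1-q) ≤ 3 := by
    have := mul_le_one₀ hh1 (by linarith : (0:ℝ) ≤ 1 - q) (by linarith : 1 - q ≤ 1)
    linarith
  have hhEcr : h*Ecr ≤ h*q*(M*M) + γ*(M*M) := by
    have h2 : h*Ecr ≤ h*(q*(M*M) + γ*(M*M)) :=
      mul_le_mul_of_nonneg_left hCrU hh0
    have h3 : h*(γ*(M*M)) ≤ γ*(M*M) :=
      mul_le_of_le_one_left (by positivity) hh1
    linarith
  constructor
  · have k1 : 4*M ≤ (M*(1 - p - h*q))*M := mul_le_mul_of_nonneg_right hE1 hMpos.le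
    have gam1 : γ*(M*M) ≤ ((1 - p - h*q)/4)*(M*M) :=
      mul_le_mul_of_nonneg_right hγa hX0
    linarith
  · have hγT : 2*γ ≤ (2 - p + h*(1-q))/7 := by
      have hq2 : 0 ≤ (1-q)*(2 - p + h*(1-q)) :=
        mul_nonneg (by linarith) (by linarith)
      linarith
    have hFlow : ((2 - p + h*(1-q)) - 2*γ)*(M*M) - 2*M
        ≤ 2*(M*M - M) - Ein - h*Ecr + h*(M*M) := by linarith
    have hL1pos : 0 ≤ ((2 - p + h*(1-q)) - 2*γ)*(M*M) - 2*M := by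
      have hstep : 0 ≤ ((2 - p + h*(1-q)) - 2*γ - 6/7)*(M*M) :=
        mul_nonneg (by linarith) hX0
      linarith
    have hCrL' : (q - γ)*(M*M) ≤ Ecr := by linarith
    have hc2 : 0 ≤ (q - γ)*(M*M) := mul_nonneg (by linarith) hX0
    have hprod : (((2 - p + h*(1-q)) - 2*γ)*(M*M) - 2*M) * ((q - γ)*(M*M))
        ≤ (2*(M*M - M) - Ein - h*Ecr + h*(M*M)) * Ecr :=
      mul_le_mul hFlow hCrL' hc2 (by linarith)
    have s1 : q*(2 - p + h*(1-q)) - 5*γ ≤ (q - γ)*((2 - p + h*(1-q)) - 2*γ) := by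
      have u1 : 0 ≤ γ*(1-q) := mul_nonneg hγ0.le (by linarith)
      have u2 : 0 ≤ γ*(3 - (2 - p + h*(1-q))) := mul_nonneg hγ0.le (by linarith)
      have u0 := sq_nonneg γ
      nlinarith [u1, u2, u0, sq_nonneg γ]
    have s2 : Ein * (M*M) ≤ ((p + γ)*(M*M))*(M*M) :=
      mul_le_mul_of_nonneg_right (by linarith) hX0
    have s4 : ((q*(2 - p + h*(1-q)) - 5*γ)*(M*M) - 2*M) * (M*M)
        ≤ (((2 - p + h*(1-q)) - 2*γ)*(M*M) - 2*M) * ((q - γ)*(M*M)) := by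
      have u3 := mul_le_mul_of_nonneg_right s1 (mul_nonneg hX0 hX0)
      have u4 : 0 ≤ (2*M)*((M*M)*(1 - q + γ)) :=
        mul_nonneg (by positivity) (mul_nonneg hX0 (by linarith))
      linarith [u3, u4]
    have s5 : ((p + γ)*(M*M))*(M*M)
        < ((q*(2 - p + h*(1-q)) - 5*γ)*(M*M) - 2*M) * (M*M) := by
      have g3 : (4/7)*(q*(2 - p + h*(1-q)) - p)
          ≤ (q*(2 - p + h*(1-q)) - 5*γ) - (p + γ) := by linarith
      have u5 := mul_le_mul_of_nonneg_right g3 (mul_nonneg hX0 hX0)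
      have g4 : 8*(M*(M*M)) ≤ (M*(q*(2 - p + h*(1-q)) - p))*(M*(M*M)) :=
        mul_le_mul_of_nonneg_right hE2 (by positivity)
      have hMX : (0:ℝ) < M*(M*M) := by positivity
      linarith [u5, g4, hMX]
    have := lt_of_lt_of_le (lt_of_le_of_lt s2 (lt_of_lt_of_le s5 s4)) hprod
    linarith

/-- The main deterministic consequence of the two concentration events. -/
lemma master₂ (p q : ℝ) (hp0 : 0 < p) (hp1 : p < 1) (hq0 : 0 < q) (hq1 : q < 1)
    (h : ℝ) (hh0 : 0 ≤ h) (hh1 : h ≤ 1)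
    (hD1 : 0 < 1 - p - h*q) (hD2 : 0 < q*(2 - p + h*(1-q)) - p)
    (γ : ℝ) (hγ0 : 0 < γ) (hγa : γ ≤ (1 - p - h*q)/4)
    (hγb : γ ≤ (q*(2 - p + h*(1-q)) - p)/14) (hγq : γ ≤ q/2)
    (m : ℕ) (hM3 : (3:ℝ) ≤ (m:ℝ))
    (hE1 : 4 ≤ (m:ℝ)*(1 - p - h*q)) (hE2 : 8 ≤ (m:ℝ)*(q*(2 - p + h*(1-q)) - p))
    (ω : Fin (2*m) × Fin (2*m) → Bool)
    (hIn : |(EinN m ω : ℝ) - p * ((WPs m).card : ℝ)| < γ*((m:ℝ)*(m:ℝ)))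
    (hCr : |(EcrN m ω : ℝ) - q * ((CPs m).card : ℝ)| < γ*((m:ℝ)*(m:ℝ))) :
    ¬ LPrecovers (2*m) (graphOf ω) := by
  have hm : 1 ≤ m := by exact_mod_cast (by linarith : (1:ℝ) ≤ (m:ℝ))
  rw [cast_WPs_card] at hIn
  rw [cast_CPs_card] at hCr
  obtain ⟨hC1, hC2⟩ := arithC p q h γ (m:ℝ) (EinN m ω : ℝ) (EcrN m ω : ℝ)
    hp0 hp1 hq0 hq1 hh0 hh1 hD1 hD2 hγ0 hγa hγb hγq hM3 hE1 hE2
    (Nat.cast_nonneg _) (Nat.cast_nonneg _) hIn hCr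
  apply master m hm ω h hh0 hh1
  · rw [cast_WPs_card]; linarith
  · rw [cast_WPs_card]; linarith [hC2]

instance (n : ℕ) (pe : Fin n × Fin n → ℝ) :
    IsProbabilityMeasure (graphMeasure n pe) := by
  unfold graphMeasure; infer_instance

def b2r (b : Bool) : ℝ := if b then 1 else 0

lemma b2r_nonneg (b : Bool) : 0 ≤ b2r b := by unfold b2r; split <;> norm_num
lemma b2r_le_one (b : Bool) : b2r b ≤ 1 := by unfold b2r; split <;> norm_num
lemma b2r_mul_self (b : Bool) : b2r b * b2r b = b2r b := by unfold b2r; split <;> norm_num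

lemma bern_singleton_true {r : ℝ} (h0 : 0 ≤ r) (h1 : r ≤ 1) :
    bern r {true} = ENNReal.ofReal r := by
  unfold bern
  rw [PMF.toMeasure_apply_singleton _ _ (measurableSet_singleton _)]
  rw [PMF.bernoulli_apply]
  simp only [Bool.cond_true]
  rw [min_eq_left (Real.toNNReal_le_one.mpr h1)]
  rfl

lemma integral_b2r_bern {r : ℝ} (h0 : 0 ≤ r) (h1 : r ≤ 1) :
    ∫ b, b2r b ∂(bern r) = r := by
  rw [integral_fintype (Integrable.of_finite)]
  simp only [Fintype.sum_bool, smul_eq_mul, b2r]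
  norm_num
  rw [measureReal_def, bern_singleton_true h0 h1, ENNReal.toReal_ofReal h0]

section PiInt

variable {n : ℕ} (pe : Fin n × Fin n → ℝ)

lemma integral_prod_eval (g : (Fin n × Fin n) → Bool → ℝ) :
    ∫ ω, ∏ s, g s (ω s) ∂(graphMeasure n pe) = ∏ s, ∫ b, g s b ∂(bern (pe s)) := by
  exact MeasureTheory.integral_fintype_prod_eq_prod (μ := fun ij => bern (pe ij)) g

lemma exp_single {s : Fin n × Fin n} (h0 : 0 ≤ pe s) (h1 : pe s ≤ 1) :
    ∫ ω, b2r (ω s) ∂(graphMeasure n pe) = pe s := by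
  have hpt : ∀ ω : (Fin n × Fin n) → Bool,
      b2r (ω s) = ∏ t, (fun t => if t = s then b2r else fun _ => (1:ℝ)) t (ω t) := by
    intro ω
    rw [show (∏ t, (fun t => if t = s then b2r else fun _ => (1:ℝ)) t (ω t))
        = ∏ t, (if t = s then b2r (ω t) else 1) from
      Finset.prod_congr rfl (fun t _ => by split <;> simp_all)]
    rw [Finset.prod_ite_eq' univ s (fun t => b2r (ω t))]
    simp
  simp_rw [hpt]
  rw [integral_prod_eval]
  have : ∀ t, (∫ b, (fun t => if t = s then b2r else fun _ => (1:ℝ)) t b ∂(bern (pe t)))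
      = if t = s then pe s else 1 := by
    intro t
    by_cases ht : t = s
    · subst ht
      simp only [if_true]
      exact integral_b2r_bern h0 h1
    · simp only [ht, if_false]
      rw [integral_const, probReal_univ]
      simp
  simp_rw [this]
  rw [Finset.prod_ite_eq' univ s (fun _ => pe s)]
  simp

lemma exp_pair {s t : Fin n × Fin n} (hst : s ≠ t)
    (h0s : 0 ≤ pe s) (h1s : pe s ≤ 1) (h0t : 0 ≤ pe t) (h1t : pe t ≤ 1) :
    ∫ ω, b2r (ω s) * b2r (ω t) ∂(graphMeasure n pe) = pe s * pe t := by
  set g : (Fin n × Fin n) → Bool → ℝ :=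
    fun u => if u = s then b2r else if u = t then b2r else fun _ => (1:ℝ) with hg
  have hgs : g s = b2r := by
    show (if s = s then b2r else if s = t then b2r else fun _ => (1:ℝ)) = b2r
    rw [if_pos rfl]
  have hgt : g t = b2r := by
    show (if t = s then b2r else if t = t then b2r else fun _ => (1:ℝ)) = b2r
    rw [if_neg (fun hc => hst hc.symm), if_pos rfl]
  have hgu : ∀ u, u ≠ s → u ≠ t → g u = fun _ => (1:ℝ) := by
    intro u hus hut
    show (if u = s then b2r else if u = t then b2r else fun _ => (1:ℝ)) = fun _ => (1:ℝ)
    rw [if_neg hus, if_neg hut]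
  have hpt : ∀ ω : (Fin n × Fin n) → Bool,
      b2r (ω s) * b2r (ω t) = ∏ u, g u (ω u) := by
    intro ω
    rw [← Finset.mul_prod_erase univ (fun u => g u (ω u)) (mem_univ s)]
    rw [← Finset.mul_prod_erase (univ.erase s) (fun u => g u (ω u))
      (Finset.mem_erase.mpr ⟨fun hc => hst hc.symm, mem_univ t⟩)]
    have h3 : ∏ u ∈ (univ.erase s).erase t, g u (ω u) = 1 := by
      apply Finset.prod_eq_one
      intro u hu
      rw [Finset.mem_erase, Finset.mem_erase] at hu
      rw [hgu u hu.2.1 hu.1]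
    rw [hgs, hgt, h3]
    ring
  simp_rw [hpt]
  rw [integral_prod_eval]
  rw [← Finset.mul_prod_erase univ (fun u => ∫ b, g u b ∂(bern (pe u))) (mem_univ s)]
  rw [← Finset.mul_prod_erase (univ.erase s) (fun u => ∫ b, g u b ∂(bern (pe u)))
    (Finset.mem_erase.mpr ⟨fun hc => hst hc.symm, mem_univ t⟩)]
  have h1 : (∫ b, g s b ∂(bern (pe s))) = pe s := by
    rw [hgs]; exact integral_b2r_bern h0s h1s
  have h2 : (∫ b, g t b ∂(bern (pe t))) = pe t := by
    rw [hgt]; exact integral_b2r_bern h0t h1t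
  have h3 : ∏ u ∈ (univ.erase s).erase t, (∫ b, g u b ∂(bern (pe u))) = 1 := by
    apply Finset.prod_eq_one
    intro u hu
    rw [Finset.mem_erase, Finset.mem_erase] at hu
    rw [hgu u hu.2.1 hu.1, integral_const, probReal_univ]
    simp
  rw [h1, h2, h3]
  ring

end PiInt

section Cheb
open ProbabilityTheory

variable {n : ℕ} (pe : Fin n × Fin n → ℝ) (S : Finset (Fin n × Fin n)) {r : ℝ}

lemma exp_Xsum (hr : ∀ s ∈ S, pe s = r) (h0 : 0 ≤ r) (h1 : r ≤ 1) :
    ∫ ω, (∑ s ∈ S, b2r (ω s)) ∂(graphMeasure n pe) = r * S.card := by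
  rw [integral_finset_sum S (fun s _ => Integrable.of_finite)]
  have : ∀ s ∈ S, (∫ ω, b2r (ω s) ∂(graphMeasure n pe)) = r := by
    intro s hs
    rw [exp_single pe (by rw [hr s hs]; exact h0) (by rw [hr s hs]; exact h1)]
    exact hr s hs
  rw [Finset.sum_congr rfl this, Finset.sum_const, nsmul_eq_mul]
  ring

lemma memLp_Xsum : MeasureTheory.MemLp (fun ω => ∑ s ∈ S, b2r (ω s)) 2 (graphMeasure n pe) := by
  refine MeasureTheory.MemLp.of_bound
    ((measurable_of_finite _).aestronglyMeasurable) (S.card : ℝ) (ae_of_all _ (fun ω => ?_))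
  rw [Real.norm_eq_abs, abs_of_nonneg (Finset.sum_nonneg (fun s _ => b2r_nonneg _))]
  calc ∑ s ∈ S, b2r (ω s) ≤ ∑ s ∈ S, 1 := Finset.sum_le_sum (fun s _ => b2r_le_one _)
    _ = (S.card : ℝ) := by rw [Finset.sum_const, nsmul_eq_mul]; ring

lemma exp_Xsum_sq (hr : ∀ s ∈ S, pe s = r) (h0 : 0 ≤ r) (h1 : r ≤ 1) :
    ∫ ω, (∑ s ∈ S, b2r (ω s))^2 ∂(graphMeasure n pe)
      = (r - r^2) * S.card + r^2 * (S.card : ℝ)^2 := by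
  have hexp : ∀ ω : (Fin n × Fin n) → Bool,
      (∑ s ∈ S, b2r (ω s))^2 = ∑ s ∈ S, ∑ t ∈ S, b2r (ω s) * b2r (ω t) := by
    intro ω
    rw [sq, Finset.sum_mul_sum]
  simp_rw [hexp]
  rw [integral_finset_sum S (fun s _ => Integrable.of_finite)]
  have hinner : ∀ s ∈ S, (∫ ω, ∑ t ∈ S, b2r (ω s) * b2r (ω t) ∂(graphMeasure n pe))
      = r^2 * S.card + (r - r^2) := by
    intro s hs
    rw [integral_finset_sum S (fun t _ => Integrable.of_finite)]
    have hterm : ∀ t ∈ S, (∫ ω, b2r (ω s) * b2r (ω t) ∂(graphMeasure n pe))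
        = r^2 + (if s = t then (r - r^2) else 0) := by
      intro t ht
      by_cases hst : s = t
      · subst hst
        simp_rw [b2r_mul_self]
        rw [exp_single pe (by rw [hr s hs]; exact h0) (by rw [hr s hs]; exact h1), hr s hs]
        simp
      · rw [exp_pair pe hst (by rw [hr s hs]; exact h0) (by rw [hr s hs]; exact h1)
          (by rw [hr t ht]; exact h0) (by rw [hr t ht]; exact h1), hr s hs, hr t ht]
        rw [if_neg hst]
        ring
    rw [Finset.sum_congr rfl hterm, Finset.sum_add_distrib, Finset.sum_const,
      Finset.sum_ite_eq S s (fun _ => r - r^2), if_pos hs, nsmul_eq_mul]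
    ring
  rw [Finset.sum_congr rfl hinner, Finset.sum_const, nsmul_eq_mul]
  ring

lemma var_Xsum (hr : ∀ s ∈ S, pe s = r) (h0 : 0 ≤ r) (h1 : r ≤ 1) :
    variance (fun ω => ∑ s ∈ S, b2r (ω s)) (graphMeasure n pe) ≤ (S.card : ℝ) := by
  rw [variance_eq_sub (memLp_Xsum pe S)]
  simp only [Pi.pow_apply]
  rw [show (∫ ω, (∑ s ∈ S, b2r (ω s))^2 ∂(graphMeasure n pe))
    = (r - r^2) * S.card + r^2 * (S.card : ℝ)^2 from exp_Xsum_sq pe S hr h0 h1]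
  rw [show (∫ ω, (∑ s ∈ S, b2r (ω s)) ∂(graphMeasure n pe)) = r * S.card from
    exp_Xsum pe S hr h0 h1]
  have hc : (0:ℝ) ≤ (S.card : ℝ) := Nat.cast_nonneg _
  nlinarith

lemma cheb (hr : ∀ s ∈ S, pe s = r) (h0 : 0 ≤ r) (h1 : r ≤ 1) {c : ℝ} (hc : 0 < c) :
    graphMeasure n pe {ω | c ≤ |(∑ s ∈ S, b2r (ω s)) - r * S.card|}
      ≤ ENNReal.ofReal ((S.card : ℝ) / c^2) := by
  have h := meas_ge_le_variance_div_sq (μ := graphMeasure n pe)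
    (X := fun ω => ∑ s ∈ S, b2r (ω s)) (memLp_Xsum pe S) hc
  rw [show (∫ ω, (∑ s ∈ S, b2r (ω s)) ∂(graphMeasure n pe)) = r * S.card from
    exp_Xsum pe S hr h0 h1] at h
  refine le_trans h (ENNReal.ofReal_le_ofReal ?_)
  exact (div_le_div_iff_of_pos_right (by positivity)).mpr (var_Xsum pe S hr h0 h1)

end Cheb

lemma param_exists (p q : ℝ)
    (hp0 : 0 < p) (hp1 : p < 1) (hq0 : 0 < q) (hq1 : q < 1)
    (hq : q > max ((3 - p - Real.sqrt ((3 - p) ^ 2 - 4 * p)) / 2) (2 * p - 1)) :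
    ∃ h : ℝ, 0 ≤ h ∧ h ≤ 1 ∧ 0 < 1 - p - h*q ∧ 0 < q*(2 - p + h*(1-q)) - p := by
  have hq2 : 2*p < 1 + q := by
    have := (max_lt_iff.mp hq).2  -- wrong direction? hq : q > max ... i.e. max < q
    linarith
  have key1 : p*(1+q) < q*(3-q) := by
    have hsq : q > (3 - p - Real.sqrt ((3 - p) ^ 2 - 4 * p)) / 2 := lt_of_le_of_lt (le_max_left _ _) hq
    have hD : (0:ℝ) ≤ (3 - p)^2 - 4*p := by nlinarith
    have hs := Real.sq_sqrt hD
    have hs0 := Real.sqrt_nonneg ((3 - p)^2 - 4*p)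
    -- from hsq : 3 - p - 2q < sqrt D, and 3 - p - 2q > 0 since p,q < 1
    have hpos : 0 < 3 - p - 2*q := by nlinarith
    have hlt : 3 - p - 2*q < Real.sqrt ((3 - p)^2 - 4*p) := by linarith
    nlinarith [sq_nonneg (Real.sqrt ((3 - p)^2 - 4*p) - (3 - p - 2*q))]
  set h₀ : ℝ := (p - q*(2-p))/(q*(1-q)) with hh₀
  set u : ℝ := min 1 ((1-p)/q) with hu
  have hden : 0 < q*(1-q) := by nlinarith
  have h₀lt1 : h₀ < 1 := by
    rw [hh₀, div_lt_one hden]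
    nlinarith
  have h₀ltu2 : h₀ < (1-p)/q := by
    rw [hh₀, div_lt_div_iff₀ hden hq0]
    nlinarith
  have hu0 : 0 < u := by
    rw [hu]
    apply lt_min one_pos
    apply div_pos (by linarith) hq0
  have h₀ltu : h₀ < u := lt_min h₀lt1 h₀ltu2
  refine ⟨max 0 ((h₀ + u)/2), le_max_left _ _, ?_, ?_, ?_⟩
  · apply max_le (by norm_num)
    have hu1 : u ≤ 1 := min_le_left _ _
    linarith
  · -- p + h q < 1  ⟺  h < (1-p)/q
    have hlt : max 0 ((h₀ + u)/2) < (1-p)/q := by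
      apply max_lt
      · apply div_pos (by linarith) hq0
      · have : u ≤ (1-p)/q := min_le_right _ _
        linarith
    have h2 : max 0 ((h₀ + u)/2) * q < 1 - p := by
      have := (lt_div_iff₀ hq0).mp hlt
      linarith
    linarith
  · -- gain: h > h₀
    have hgt : h₀ < max 0 ((h₀ + u)/2) := lt_of_lt_of_le (by linarith) (le_max_right _ _)
    rw [hh₀, div_lt_iff₀ hden] at hgt
    nlinarith

lemma sbmPe_on_WPs {m : ℕ} (p q : ℝ) {s : Fin (2*m) × Fin (2*m)} (hs : s ∈ WPs m) :
    sbmPe (2*m) p q s = p := by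
  simp only [WPs, Finset.mem_filter] at hs
  unfold sbmPe
  rw [if_pos hs.2.1, if_pos hs.2.2]

lemma sbmPe_on_CPs {m : ℕ} (p q : ℝ) {s : Fin (2*m) × Fin (2*m)} (hs : s ∈ CPs m) :
    sbmPe (2*m) p q s = q := by
  simp only [CPs, Finset.mem_filter] at hs
  unfold sbmPe
  rw [if_pos hs.2.1, if_neg hs.2.2]

lemma sum_b2r_WPs {m : ℕ} (ω : Fin (2*m) × Fin (2*m) → Bool) :
    ∑ s ∈ WPs m, b2r (ω s) = (EinN m ω : ℝ) := by
  unfold b2r EinN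
  rw [Finset.sum_boole]

lemma sum_b2r_CPs {m : ℕ} (ω : Fin (2*m) × Fin (2*m) → Bool) :
    ∑ s ∈ CPs m, b2r (ω s) = (EcrN m ω : ℝ) := by
  unfold b2r EcrN
  rw [Finset.sum_boole]

end AuxNonRecovery

/-- Let `p, q ∈ (0,1)` be constants with
`q > max{(3 - p - √((3-p)² - 4p))/2, 2p - 1}`.  Then, with high probability (as
`n = 2m → ∞` along even `n`), for `G` drawn from the stochastic block model
`𝒢_{n,p,q}` the metric LP relaxation fails to recover the planted bisection. -/
theorem sbm_lp_nonrecovery_very_dense (p q : ℝ)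
    (hp0 : 0 < p) (hp1 : p < 1) (hq0 : 0 < q) (hq1 : q < 1)
    (hq : q > max ((3 - p - Real.sqrt ((3 - p) ^ 2 - 4 * p)) / 2) (2 * p - 1)) :
    Tendsto (fun m : ℕ =>
      graphMeasure (2 * m) (sbmPe (2 * m) p q)
        {ω | ¬ LPrecovers (2 * m) (graphOf ω)})
      atTop (nhds 1) := by
  obtain ⟨h, hh0, hh1, hD1, hD2⟩ := param_exists p q hp0 hp1 hq0 hq1 hq
  set γ : ℝ := min (min ((1 - p - h*q)/4) ((q*(2 - p + h*(1-q)) - p)/14)) (q/2) with hγdef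
  have hγ0 : 0 < γ := lt_min (lt_min (by linarith) (by linarith)) (by linarith)
  have hγa : γ ≤ (1 - p - h*q)/4 := le_trans (min_le_left _ _) (min_le_left _ _)
  have hγb : γ ≤ (q*(2 - p + h*(1-q)) - p)/14 :=
    le_trans (min_le_left _ _) (min_le_right _ _)
  have hγq : γ ≤ q/2 := min_le_right _ _
  have hlow0 : Tendsto (fun m : ℕ => (2:ℝ)/(γ^2*((m:ℝ)*(m:ℝ)))) atTop (nhds 0) := by
    have h1 : (fun m : ℕ => (2:ℝ)/(γ^2*((m:ℝ)*(m:ℝ))))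
        = fun m : ℕ => ((2:ℝ)/γ^2) * ((1/(m:ℝ)) * (1/(m:ℝ))) := by
      funext m
      ring
    rw [h1]
    have h2 := tendsto_one_div_atTop_nhds_zero_nat (𝕜 := ℝ)
    have h3 := (h2.mul h2).const_mul ((2:ℝ)/γ^2)
    simpa using h3
  have hofr : Tendsto (fun m : ℕ => ENNReal.ofReal ((2:ℝ)/(γ^2*((m:ℝ)*(m:ℝ)))))
      atTop (nhds 0) := by
    have := ENNReal.tendsto_ofReal (a := 0) hlow0
    simpa using this
  have hlob : Tendsto (fun m : ℕ => 1 - ENNReal.ofReal ((2:ℝ)/(γ^2*((m:ℝ)*(m:ℝ)))))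
      atTop (nhds 1) := by
    have hcont := (ENNReal.continuous_sub_left (ENNReal.one_ne_top)).tendsto (0 : ℝ≥0∞)
    have := hcont.comp hofr
    rw [tsub_zero] at this
    exact this
  apply tendsto_of_tendsto_of_tendsto_of_le_of_le' hlob tendsto_const_nhds ?_ ?_
  · -- eventual lower bound
    have hev1 : ∀ᶠ m : ℕ in atTop, (3:ℝ) ≤ (m:ℝ) := by
      filter_upwards [eventually_ge_atTop 3] with m hm
      exact_mod_cast hm
    have hev2 : ∀ᶠ m : ℕ in atTop, 4 ≤ (m:ℝ)*(1 - p - h*q) := by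
      filter_upwards [eventually_ge_atTop ⌈(4:ℝ)/(1 - p - h*q)⌉₊] with m hm
      have h1 : (4:ℝ)/(1 - p - h*q) ≤ (m:ℝ) :=
        le_trans (Nat.le_ceil _) (by exact_mod_cast hm)
      rw [div_le_iff₀ hD1] at h1
      linarith
    have hev3 : ∀ᶠ m : ℕ in atTop, 8 ≤ (m:ℝ)*(q*(2 - p + h*(1-q)) - p) := by
      filter_upwards [eventually_ge_atTop ⌈(8:ℝ)/(q*(2 - p + h*(1-q)) - p)⌉₊] with m hm
      have h1 : (8:ℝ)/(q*(2 - p + h*(1-q)) - p) ≤ (m:ℝ) :=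
        le_trans (Nat.le_ceil _) (by exact_mod_cast hm)
      rw [div_le_iff₀ hD2] at h1
      linarith
    filter_upwards [hev1, hev2, hev3] with m hM3 hE1 hE2
    have hM0 : (0:ℝ) < (m:ℝ) := by linarith
    have hcpos : (0:ℝ) < γ*((m:ℝ)*(m:ℝ)) := by positivity
    have hb1 : graphMeasure (2*m) (sbmPe (2*m) p q)
        {ω | γ*((m:ℝ)*(m:ℝ)) ≤ |(∑ s ∈ WPs m, b2r (ω s)) - p * ((WPs m).card : ℝ)|}
        ≤ ENNReal.ofReal ((1:ℝ)/(γ^2*((m:ℝ)*(m:ℝ)))) := by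
      refine le_trans (cheb (sbmPe (2*m) p q) (WPs m)
        (fun s hs => sbmPe_on_WPs p q hs) hp0.le hp1.le hcpos)
        (ENNReal.ofReal_le_ofReal ?_)
      rw [div_le_div_iff₀ (by positivity) (by positivity)]
      have hWle : ((WPs m).card : ℝ) ≤ (m:ℝ)*(m:ℝ) := by
        rw [cast_WPs_card]; linarith
      have hkey := mul_le_mul_of_nonneg_right hWle (by positivity : (0:ℝ) ≤ γ^2*((m:ℝ)*(m:ℝ)))
      nlinarith [hkey]
    have hb2 : graphMeasure (2*m) (sbmPe (2*m) p q)
        {ω | γ*((m:ℝ)*(m:ℝ)) ≤ |(∑ s ∈ CPs m, b2r (ω s)) - q * ((CPs m).card : ℝ)|}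
        ≤ ENNReal.ofReal ((1:ℝ)/(γ^2*((m:ℝ)*(m:ℝ)))) := by
      refine le_trans (cheb (sbmPe (2*m) p q) (CPs m)
        (fun s hs => sbmPe_on_CPs p q hs) hq0.le hq1.le hcpos)
        (ENNReal.ofReal_le_ofReal ?_)
      rw [div_le_div_iff₀ (by positivity) (by positivity)]
      have hWle : ((CPs m).card : ℝ) ≤ (m:ℝ)*(m:ℝ) := by
        rw [cast_CPs_card]
      have hkey := mul_le_mul_of_nonneg_right hWle (by positivity : (0:ℝ) ≤ γ^2*((m:ℝ)*(m:ℝ)))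
      nlinarith [hkey]
    set B1 : Set (Fin (2*m) × Fin (2*m) → Bool) :=
      {ω | γ*((m:ℝ)*(m:ℝ)) ≤ |(∑ s ∈ WPs m, b2r (ω s)) - p * ((WPs m).card : ℝ)|} with hB1
    set B2 : Set (Fin (2*m) × Fin (2*m) → Bool) :=
      {ω | γ*((m:ℝ)*(m:ℝ)) ≤ |(∑ s ∈ CPs m, b2r (ω s)) - q * ((CPs m).card : ℝ)|} with hB2
    have hsum : graphMeasure (2*m) (sbmPe (2*m) p q) B1
        + graphMeasure (2*m) (sbmPe (2*m) p q) B2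
        ≤ ENNReal.ofReal ((2:ℝ)/(γ^2*((m:ℝ)*(m:ℝ)))) := by
      refine le_trans (add_le_add hb1 hb2) ?_
      rw [← ENNReal.ofReal_add (by positivity) (by positivity)]
      apply ENNReal.ofReal_le_ofReal
      rw [← add_div]
      norm_num
    have hsub : (B1 ∪ B2)ᶜ ⊆ {ω | ¬ LPrecovers (2*m) (graphOf ω)} := by
      intro ω hω
      rw [Set.mem_compl_iff, Set.mem_union] at hω
      push_neg at hω
      obtain ⟨h1, h2⟩ := hω
      rw [hB1, Set.mem_setOf_eq, not_le] at h1
      rw [hB2, Set.mem_setOf_eq, not_le] at h2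
      rw [sum_b2r_WPs] at h1
      rw [sum_b2r_CPs] at h2
      exact master₂ p q hp0 hp1 hq0 hq1 h hh0 hh1 hD1 hD2 γ hγ0 hγa hγb hγq
        m hM3 hE1 hE2 ω h1 h2
    calc 1 - ENNReal.ofReal ((2:ℝ)/(γ^2*((m:ℝ)*(m:ℝ))))
        ≤ 1 - (graphMeasure (2*m) (sbmPe (2*m) p q) B1
            + graphMeasure (2*m) (sbmPe (2*m) p q) B2) := tsub_le_tsub_left hsum 1
      _ ≤ 1 - graphMeasure (2*m) (sbmPe (2*m) p q) (B1 ∪ B2) :=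
          tsub_le_tsub_left (measure_union_le _ _) 1
      _ ≤ graphMeasure (2*m) (sbmPe (2*m) p q) ((B1 ∪ B2)ᶜ) := by
          rw [tsub_le_iff_right]
          have h1 : (1:ℝ≥0∞) = graphMeasure (2*m) (sbmPe (2*m) p q) Set.univ :=
            (measure_univ).symm
          rw [h1, ← Set.compl_union_self (B1 ∪ B2)]
          exact measure_union_le _ _
      _ ≤ graphMeasure (2*m) (sbmPe (2*m) p q)
            {ω | ¬ LPrecovers (2*m) (graphOf ω)} := measure_mono hsub
  · exact Filter.Eventually.of_forall (fun m => prob_le_one)
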